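/- Let G be a group and x ∈ Z^G such that φ_x(g) := g·x − x lies in the group ring Z G for every g. Then φ_x is a 1-coboundary with Z G coefficients (i.e., there exists y ∈ Z G with g·x − x = g·y − y for all g) if and only if x is constant outside a finite subset of G. -/

import Mathlib

/-- Suppose `x ∈ ℤ^G` is such that `φ_x(g) = g·x − x` lies in the group ring `ℤG` for all
`g`.  Then `φ_x` is a 1-coboundary with `ℤG`-coefficients iff `x` is constant outside a
finite subset of `G`. -/
theorem coboundary_iff_constant_off_finite {G : Type*} [Group G] (x : G → ℤ)
    (hval : ∀ g : G, (Function.support fun h => x (g⁻¹ * h) - x h).Finite) :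
    (∃ y : G → ℤ, (Function.support y).Finite ∧
        ∀ g h : G, x (g⁻¹ * h) - x h = y (g⁻¹ * h) - y h) ↔
    (∃ d : ℤ, ∃ F : Set G, F.Finite ∧ ∀ g ∉ F, x g = d) := by
  constructor
  · rintro ⟨y, hy, hxy⟩
    refine ⟨x 1 - y 1, Function.support y, hy, fun g hg => ?_⟩
    have h := hxy g⁻¹ 1
    simp only [inv_inv, mul_one] at h
    have hyg : y g = 0 := Function.notMem_support.mp hg
    omega
  · rintro ⟨d, F, hF, hd⟩
    refine ⟨fun g => x g - d, hF.subset ?_, fun g h => by ring⟩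
    intro g hg
    by_contra hgF
    exact hg (by simp [hd g hgF])
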